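/- arXiv:0803.0270 — 11 statements merged into one kernel-verified Lean document; each statement's English description precedes it below -/
import Mathlib

section
/- If a positive natural number N is autobiographical with base-10 digits d_0 d_1 … d_{k-1} (most-significant-first), then the sum d_1 + d_2 + … + d_{k-1} of all digits except the first equals 1 plus the number of indices i with 1 ≤ i ≤ k-1 such that d_i ≠ 0. -/
/-- The base-10 digits of `N`, written most-significant-first. -/
def msdDigits (N : ℕ) : List ℕ := (Nat.digits 10 N).reverse

/-- A positive natural number `N` is autobiographical if, writing its base-10 digits
most-significant-first as `d_0 d_1 … d_{k-1}`, for every `i < k` the digit `d_i` equals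
the number of occurrences of the digit `i` in the base-10 representation of `N`. -/
def Autobiographical (N : ℕ) : Prop :=
  ∀ i < (msdDigits N).length, (msdDigits N).getD i 0 = (msdDigits N).count i

private lemma aux_sum_getD (L : List ℕ) :
    L.sum = ∑ i ∈ Finset.range L.length, L.getD i 0 := by
  induction L with
  | nil => simp
  | cons a t ih => simp [Finset.sum_range_succ', ih, Nat.add_comm]

private lemma aux_sum_count (n : ℕ) (L : List ℕ) (h : ∀ x ∈ L, x < n) :
    ∑ i ∈ Finset.range n, L.count i = L.length := by
  induction L with
  | nil => simp
  | cons a t ih =>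
    simp only [List.count_cons, List.length_cons]
    rw [Finset.sum_add_distrib, ih (fun x hx => h x (List.mem_cons_of_mem _ hx))]
    have ha : a ∈ Finset.range n := Finset.mem_range.mpr (h a List.mem_cons_self)
    have : (∑ x ∈ Finset.range n, if (a == x) = true then 1 else 0) = 1 := by
      simp only [beq_iff_eq]
      rw [Finset.sum_ite_eq (Finset.range n) a (fun _ => 1)]
      simp [ha]
    omega

theorem autobiographical_tail_sum (N : ℕ) (hN : 0 < N)
    (hA : Autobiographical N) :
    (msdDigits N).tail.sum = 1 + (msdDigits N).tail.countP (fun d => d ≠ 0) := by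
  have hNne : N ≠ 0 := hN.ne'
  have hdne : Nat.digits 10 N ≠ [] := Nat.digits_ne_nil_iff_ne_zero.mpr hNne
  have hLne : msdDigits N ≠ [] := by simp [msdDigits, hdne]
  -- every element is < length
  have hlt : ∀ x ∈ msdDigits N, x < (msdDigits N).length := by
    intro x hx
    by_contra hcon
    push_neg at hcon
    obtain ⟨i, hi, hix⟩ := List.mem_iff_getElem.mp hx
    have hgd : (msdDigits N).getD i 0 = x := by
      rw [List.getD_eq_getElem (msdDigits N) 0 hi, hix]
    have hcount : (msdDigits N).count i = x := (hA i hi).symm.trans hgd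
    have hxle : x ≤ (msdDigits N).length := hcount ▸ (msdDigits N).count_le_length (a := i)
    have hxk : x = (msdDigits N).length := le_antisymm hxle hcon
    have hall : ∀ b ∈ msdDigits N, i = b :=
      List.count_eq_length.mp (by rw [hcount, hxk])
    have : i = x := hall x hx
    omega
  -- total digit sum equals the number of digits
  have hsum : (msdDigits N).sum = (msdDigits N).length := by
    rw [aux_sum_getD (msdDigits N)]
    rw [Finset.sum_congr rfl (fun i hi => hA i (Finset.mem_range.mp hi))]
    exact aux_sum_count _ _ hlt
  obtain ⟨a, t, hat⟩ := List.exists_cons_of_ne_nil hLne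
  -- leading digit is nonzero
  have ha0 : a ≠ 0 := by
    have h1 : (msdDigits N).head hLne = (Nat.digits 10 N).getLast
        (Nat.digits_ne_nil_iff_ne_zero.mpr hNne) := List.head_reverse hLne
    have h2 : (msdDigits N).head hLne = a := by simp [hat]
    rw [h1] at h2
    rw [← h2]
    exact Nat.getLast_digit_ne_zero 10 hNne
  have hk1 : (msdDigits N).length = t.length + 1 := by rw [hat]; simp
  -- first digit counts the zeros
  have hd0 : a = (msdDigits N).count 0 := by
    have h := hA 0 (by omega)
    rwa [hat, List.getD_cons_zero, ← hat] at h
  have hc0 : (msdDigits N).count 0 = t.count 0 := by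
    rw [hat, List.count_cons]
    simp [ha0]
  have hts : t.sum = (msdDigits N).length - a := by
    have : (msdDigits N).sum = a + t.sum := by rw [hat]; simp
    omega
  have hcle : t.count 0 ≤ t.length := t.count_le_length (a := 0)
  have hcp : t.countP (fun d => d ≠ 0) = t.length - t.count 0 := by
    have h1 : t.length = t.countP (fun d => d ≠ 0) + t.count 0 := by
      rw [List.length_eq_countP_add_countP (fun d => d ≠ 0) (l := t), List.count_eq_countP]
      congr 1
      apply List.countP_congr
      intro x _
      simp
    omega
  have htail : (msdDigits N).tail = t := by rw [hat]; rfl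
  rw [htail, hts, hcp]
  omega
end

section
/- If a positive natural number N is autobiographical with base-10 digits d_0 d_1 … d_{k-1} (most-significant-first), then among the digits d_1, …, d_{k-1} exactly one equals 2, and every other one of these digits is 0 or 1. -/
lemma lemA : ∀ T : List ℕ, T.length ≤ T.sum + T.count 0
  | [] => le_refl 0
  | a :: T => by
    have := lemA T
    simp only [List.sum_cons, List.length_cons, List.count_cons, beq_iff_eq]
    split <;> omega

lemma lemB : ∀ T : List ℕ, T.sum + T.count 0 = T.length →
    ∀ d ∈ T, d = 0 ∨ d = 1
  | [] => by simp
  | a :: T => by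
    intro h d hd
    have hA := lemA T
    have hcc : (a :: T).count 0 = T.count 0 + (if a = 0 then 1 else 0) := by
      simp [List.count_cons]
    have hIH : T.sum + T.count 0 = T.length ∧ (a = 0 ∨ a = 1) := by
      simp only [List.sum_cons, List.length_cons] at h
      rw [hcc] at h
      split at h <;> omega
    rcases List.mem_cons.mp hd with rfl | hd
    · exact hIH.2
    · exact lemB T hIH.1 d hd

lemma lemC : ∀ T : List ℕ, T.sum + T.count 0 = T.length + 1 →
    T.count 2 = 1 ∧ ∀ d ∈ T, d ≠ 2 → d = 0 ∨ d = 1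
  | [] => by simp
  | a :: T => by
    intro h
    have hA := lemA T
    have hcc : (a :: T).count 0 = T.count 0 + (if a = 0 then 1 else 0) := by
      simp [List.count_cons]
    have hc2 : (a :: T).count 2 = T.count 2 + (if a = 2 then 1 else 0) := by
      simp [List.count_cons]
    simp only [List.sum_cons, List.length_cons] at h
    rw [hcc] at h
    by_cases ha2 : a = 2
    · subst ha2
      simp only [if_neg (by norm_num : (2:ℕ) ≠ 0)] at h
      have hT : T.sum + T.count 0 = T.length := by omega
      have hall := lemB T hT
      have hz : T.count 2 = 0 := by
        rw [List.count_eq_zero]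
        intro hmem
        rcases hall 2 hmem with h' | h' <;> omega
      constructor
      · rw [hc2, hz]; simp
      · intro d hd hd2
        rcases List.mem_cons.mp hd with rfl | hd
        · exact absurd rfl hd2
        · exact hall d hd
    · have hle : a ≤ 1 := by split at h <;> omega
      have hT : T.sum + T.count 0 = T.length + 1 := by split at h <;> omega
      obtain ⟨h1, h2⟩ := lemC T hT
      constructor
      · rw [hc2, h1, if_neg ha2]
      · intro d hd hd2
        rcases List.mem_cons.mp hd with rfl | hd
        · omega
        · exact h2 d hd hd2

lemma lemD : ∀ (L : List ℕ) (k : ℕ), (∀ x ∈ L, x < k) →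
    ∑ i ∈ Finset.range k, L.count i = L.length
  | [], k, _ => by simp
  | a :: L, k, h => by
    have ha : a < k := h a (by simp)
    have hIH := lemD L k (fun x hx => h x (by simp [hx]))
    have hc : ∀ i, (a :: L).count i = L.count i + (if i = a then 1 else 0) := by
      intro i
      rw [List.count_cons]
      simp only [beq_iff_eq]
      exact congrArg _ (if_congr eq_comm rfl rfl)
    rw [Finset.sum_congr rfl (fun i _ => hc i), Finset.sum_add_distrib, hIH,
      Finset.sum_ite_eq' (Finset.range k)]
    simp [ha]

lemma lemF : ∀ L : List ℕ, ∑ i ∈ Finset.range L.length, L.getD i 0 = L.sum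
  | [] => by simp
  | a :: L => by
    rw [List.length_cons, Finset.sum_range_succ']
    simp only [List.getD_cons_succ, List.getD_cons_zero, List.sum_cons, lemF L]
    omega

lemma keyLemma (L : List ℕ) (hk : 0 < L.length) (hhead : L.getD 0 0 ≠ 0)
    (hA : ∀ i < L.length, L.getD i 0 = L.count i) :
    L.tail.count 2 = 1 ∧ ∀ d ∈ L.tail, d ≠ 2 → d = 0 ∨ d = 1 := by
  have hLne : L ≠ [] := List.length_pos_iff.mp hk
  -- every entry is < L.length
  have hlt : ∀ x ∈ L, x < L.length := by
    intro x hx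
    obtain ⟨j, hj, hxj⟩ := List.getElem_of_mem hx
    have hxd : L.getD j 0 = x := by rw [List.getD_eq_getElem _ _ hj, hxj]
    have hcount : x = L.count j := by rw [← hxd]; exact hA j hj
    have hle : L.count j ≤ L.length := List.count_le_length
    rcases lt_or_eq_of_le hle with h | h
    · omega
    · exfalso
      have hall : ∀ b ∈ L, j = b := List.count_eq_length.mp h
      have h0 : L.getD 0 0 = L.count 0 := hA 0 hk
      have hmem0 : L.getD 0 0 ∈ L := by
        rw [List.getD_eq_getElem _ _ hk]; exact List.getElem_mem _
      have hj0 : j = L.getD 0 0 := hall _ hmem0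
      by_cases hjz : j = 0
      · exact hhead (hj0.symm.trans hjz)
      · have hcz : L.count 0 = 0 := by
          rw [List.count_eq_zero]
          intro hm
          exact hjz (hall 0 hm)
        rw [h0, hcz] at hj0
        exact hjz hj0
  -- sum of digits equals length
  have hsum : L.sum = L.length := by
    have h1 : ∑ i ∈ Finset.range L.length, L.getD i 0 = L.length := by
      have hcongr : ∀ i ∈ Finset.range L.length, L.getD i 0 = L.count i := by
        intro i hi; exact hA i (Finset.mem_range.mp hi)
      rw [Finset.sum_congr rfl hcongr, lemD L L.length hlt]
    rw [← lemF L, h1]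
  have h0 : L.getD 0 0 = L.count 0 := hA 0 hk
  cases L with
  | nil => exact absurd rfl hLne
  | cons a T =>
    simp only [List.getD_cons_zero] at hhead h0
    have hcT : T.count 0 = a := by
      rw [List.count_cons, if_neg (by exact fun hc => hhead (by simpa using hc))] at h0
      omega
    have hC : T.sum + T.count 0 = T.length + 1 := by
      simp only [List.sum_cons, List.length_cons] at hsum
      omega
    simpa using lemC T hC

theorem autobiographical_tail_digits (N : ℕ) (hN : 0 < N)
    (hA : Autobiographical N) :
    (msdDigits N).tail.count 2 = 1 ∧
      ∀ d ∈ (msdDigits N).tail, d ≠ 2 → d = 0 ∨ d = 1 := by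
  apply keyLemma
  · have hdne : Nat.digits 10 N ≠ [] := Nat.digits_ne_nil_iff_ne_zero.mpr hN.ne'
    simpa [msdDigits] using List.length_pos_iff.mpr hdne
  · have hdne : Nat.digits 10 N ≠ [] := Nat.digits_ne_nil_iff_ne_zero.mpr hN.ne'
    have hk : 0 < (msdDigits N).length := by
      simpa [msdDigits] using List.length_pos_iff.mpr hdne
    rw [msdDigits, List.getD_eq_getElem _ _ (by simpa [msdDigits] using hk)]
    rw [List.getElem_reverse]
    have hlast := Nat.getLast_digit_ne_zero 10 hN.ne'
    rwa [List.getLast_eq_getElem] at hlast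
  · exact hA
end

section
/- If a positive natural number N is autobiographical, then the number of occurrences of the digit 1 in the base-10 representation of N is 0, 1, or 2. -/
lemma count_eq_card_filter_range (l : List ℕ) (v : ℕ) :
    ((Finset.range l.length).filter (fun i => l.getD i 0 = v)).card = l.count v := by
  induction l with
  | nil => simp
  | cons x t ih =>
    rw [Finset.card_filter] at ih ⊢
    rw [List.length_cons, Finset.sum_range_succ']
    simp only [List.getD_cons_succ, List.getD_cons_zero, List.count_cons]
    rw [ih]
    by_cases h : x = v <;> simp [h]

set_option maxHeartbeats 1000000 in
lemma autobio_caseA (c : ℕ → ℕ)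
    (star' : c 2 + 2 * c 3 + 3 * c 4 + 4 * c 5 + 5 * c 6 + 6 * c 7 + 7 * c 8 + 8 * c 9 ≤ c 0)
    (hz1 : c 0 = 1) (hc3 : 3 ≤ c 1) (hc9 : c 1 ≤ 9) (hm1 : 1 ≤ c (c 1)) : False := by
  obtain ⟨m, hm⟩ : ∃ m, c 1 = m := ⟨_, rfl⟩
  rw [hm] at hc3 hc9 hm1
  interval_cases m <;> omega

set_option maxHeartbeats 2000000 in
lemma autobio_caseB (c : ℕ → ℕ) (a b e : ℕ)
    (star' : c 2 + 2 * c 3 + 3 * c 4 + 4 * c 5 + 5 * c 6 + 6 * c 7 + 7 * c 8 + 8 * c 9 ≤ c 0)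
    (hab : a ≠ b) (hae : a ≠ e) (hbe : b ≠ e)
    (ha2 : 2 ≤ a) (ha9 : a ≤ 9) (hca : c a = 1)
    (hb2 : 2 ≤ b) (hb9 : b ≤ 9) (hcb : c b = 1)
    (he2 : 2 ≤ e) (he9 : e ≤ 9) (hce : c e = 1)
    (hz1 : c 0 ≠ 1) (hz0 : 1 ≤ c 0) (hz9 : c 0 ≤ 9) (hcz : 1 ≤ c (c 0)) : False := by
  obtain ⟨z, hzz⟩ : ∃ z, c 0 = z := ⟨_, rfl⟩
  rw [hzz] at hz1 hz0 hz9 hcz star'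
  have Ha : (a = 2 ∧ c 2 = 1) ∨ (a = 3 ∧ c 3 = 1) ∨ (a = 4 ∧ c 4 = 1)
      ∨ (a = 5 ∧ c 5 = 1) ∨ (a = 6 ∧ c 6 = 1) ∨ (a = 7 ∧ c 7 = 1)
      ∨ (a = 8 ∧ c 8 = 1) ∨ (a = 9 ∧ c 9 = 1) := by
    interval_cases a <;> omega
  have Hb : (b = 2 ∧ c 2 = 1) ∨ (b = 3 ∧ c 3 = 1) ∨ (b = 4 ∧ c 4 = 1)
      ∨ (b = 5 ∧ c 5 = 1) ∨ (b = 6 ∧ c 6 = 1) ∨ (b = 7 ∧ c 7 = 1)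
      ∨ (b = 8 ∧ c 8 = 1) ∨ (b = 9 ∧ c 9 = 1) := by
    interval_cases b <;> omega
  have He : (e = 2 ∧ c 2 = 1) ∨ (e = 3 ∧ c 3 = 1) ∨ (e = 4 ∧ c 4 = 1)
      ∨ (e = 5 ∧ c 5 = 1) ∨ (e = 6 ∧ c 6 = 1) ∨ (e = 7 ∧ c 7 = 1)
      ∨ (e = 8 ∧ c 8 = 1) ∨ (e = 9 ∧ c 9 = 1) := by
    interval_cases e <;> omega
  have Hz : (z = 2 ∧ 1 ≤ c 2) ∨ (z = 3 ∧ 1 ≤ c 3) ∨ (z = 4 ∧ 1 ≤ c 4)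
      ∨ (z = 5 ∧ 1 ≤ c 5) ∨ (z = 6 ∧ 1 ≤ c 6) ∨ (z = 7 ∧ 1 ≤ c 7)
      ∨ (z = 8 ∧ 1 ≤ c 8) ∨ (z = 9 ∧ 1 ≤ c 9) := by
    interval_cases z <;> omega
  clear hzz hca hcb hce hcz
  omega

theorem autobiographical_count_one (N : ℕ) (hN : 0 < N)
    (hA : Autobiographical N) :
    (Nat.digits 10 N).count 1 = 0 ∨ (Nat.digits 10 N).count 1 = 1 ∨
      (Nat.digits 10 N).count 1 = 2 := by
  by_contra hcon
  push_neg at hcon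
  set L := Nat.digits 10 N with hLdef
  set k := L.length with hk
  have hc3 : 3 ≤ L.count 1 := by omega
  have hA' : ∀ i < k, L.reverse.getD i 0 = L.count i := by
    intro i hi
    have := hA i (by simpa [msdDigits] using hi)
    simpa [msdDigits, List.count_reverse] using this
  have P1 : ∀ v, L.count v =
      ((Finset.range k).filter (fun i => L.count i = v)).card := by
    intro v
    have h1 := count_eq_card_filter_range L.reverse v
    rw [List.count_reverse, List.length_reverse] at h1
    rw [← h1]
    congr 1
    apply Finset.filter_congr
    intro i hi
    rw [Finset.mem_range] at hi
    rw [hA' i hi]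
  have P2 : ∀ i < k, L.count i ≤ 9 := by
    intro i hi
    have hlen : i < L.reverse.length := by rw [List.length_reverse]; exact hk ▸ hi
    rw [← hA' i hi, List.getD_eq_getElem L.reverse 0 hlen]
    have hmem : L.reverse[i] ∈ L := List.mem_reverse.mp (List.getElem_mem hlen)
    have := Nat.digits_lt_base (by norm_num) hmem
    omega
  have hk3 : 3 ≤ k := by
    calc 3 ≤ L.count 1 := hc3
    _ = ((Finset.range k).filter (fun i => L.count i = 1)).card := P1 1
    _ ≤ (Finset.range k).card := Finset.card_filter_le _ _
    _ = k := Finset.card_range k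
  have P3 : 1 ≤ L.count 0 := by
    have hne : L ≠ [] := Nat.digits_ne_nil_iff_ne_zero.mpr hN.ne'
    have hne' : L.reverse ≠ [] := by simpa using hne
    have h0 : L.reverse.getD 0 0 = L.reverse.head hne' := by
      rw [List.getD_eq_getElem L.reverse 0 (by simp [List.length_reverse]; omega),
        List.head_eq_getElem]
    have hlast := Nat.getLast_digit_ne_zero 10 (m := N) hN.ne'
    rw [← hA' 0 (by omega), h0, List.head_reverse]
    exact Nat.pos_of_ne_zero hlast
  have A1 : k = ∑ v ∈ Finset.range 10, L.count v := by
    have h := Finset.card_eq_sum_card_fiberwise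
      (f := fun i => L.count i) (s := Finset.range k) (t := Finset.range 10)
      (fun i hi => Finset.mem_range.2 (lt_of_le_of_lt (P2 i (Finset.mem_range.1 hi))
        (by norm_num)))
    rw [Finset.card_range] at h
    rw [h]
    exact Finset.sum_congr rfl fun v _ => (P1 v).symm
  have A2 : ∑ i ∈ Finset.range k, L.count i = ∑ v ∈ Finset.range 10, v * L.count v := by
    rw [← Finset.sum_fiberwise_of_maps_to
      (g := fun i => L.count i) (t := Finset.range 10)
      (fun i hi => Finset.mem_range.2 (lt_of_le_of_lt (P2 i (Finset.mem_range.1 hi))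
        (by norm_num))) (fun i => L.count i)]
    apply Finset.sum_congr rfl
    intro v _
    have : ∀ x ∈ (Finset.range k).filter (fun i => L.count i = v), L.count x = v :=
      fun x hx => (Finset.mem_filter.1 hx).2
    rw [Finset.sum_congr rfl this, Finset.sum_const, smul_eq_mul, ← P1 v, mul_comm]
  have A3 : ∑ i ∈ Finset.range k, L.count i ≤ k := by
    have maps : ∀ j ∈ (Finset.range k).filter (fun j => L.count j < k),
        L.count j ∈ Finset.range k :=
      fun j hj => Finset.mem_range.2 (Finset.mem_filter.1 hj).2
    have h := Finset.card_eq_sum_card_fiberwise maps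
    calc ∑ i ∈ Finset.range k, L.count i
        = ∑ i ∈ Finset.range k,
            (((Finset.range k).filter (fun j => L.count j < k)).filter
              (fun j => L.count j = i)).card := by
          apply Finset.sum_congr rfl
          intro i hi
          rw [Finset.mem_range] at hi
          rw [P1 i]
          congr 1
          rw [Finset.filter_filter]
          apply Finset.filter_congr
          intro j _
          constructor
          · intro hji; exact ⟨by omega, hji⟩
          · intro hji; exact hji.2
      _ = ((Finset.range k).filter (fun j => L.count j < k)).card := h.symm
      _ ≤ (Finset.range k).card := Finset.card_filter_le _ _
      _ = k := Finset.card_range k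
  have star : ∑ v ∈ Finset.range 10, v * L.count v ≤ ∑ v ∈ Finset.range 10, L.count v := by
    rw [← A2, ← A1]; exact A3
  have star' : L.count 2 + 2 * L.count 3 + 3 * L.count 4 + 4 * L.count 5 + 5 * L.count 6
      + 6 * L.count 7 + 7 * L.count 8 + 8 * L.count 9 ≤ L.count 0 := by
    simp only [Finset.sum_range_succ, Finset.sum_range_zero] at star
    omega
  have hc9 : L.count 1 ≤ 9 := P2 1 (by omega)
  have hz9 : L.count 0 ≤ 9 := P2 0 (by omega)
  have occ : ∀ i < k, 1 ≤ L.count (L.count i) := by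
    intro i hi
    rw [P1 (L.count i)]
    apply Finset.card_pos.2
    exact ⟨i, Finset.mem_filter.2 ⟨Finset.mem_range.2 hi, rfl⟩⟩
  by_cases hz1 : L.count 0 = 1
  · exact autobio_caseA (fun v => L.count v) star' hz1 hc3 hc9 (occ 1 (by omega))
  · have hfib : 2 < ((Finset.range k).filter (fun i => L.count i = 1)).card := by
      rw [← P1 1]; omega
    obtain ⟨a, ha, b, hb, e, he, hab, hae, hbe⟩ := Finset.two_lt_card.1 hfib
    have hprop : ∀ x ∈ (Finset.range k).filter (fun i => L.count i = 1),
        2 ≤ x ∧ x ≤ 9 ∧ L.count x = 1 := by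
      intro x hx
      obtain ⟨hxr, hxc⟩ := Finset.mem_filter.1 hx
      rw [Finset.mem_range] at hxr
      have hx0 : x ≠ 0 := by rintro rfl; exact hz1 hxc
      have hx1 : x ≠ 1 := by rintro rfl; omega
      have hx9 : x ≤ 9 := by
        by_contra hx10
        have : L.count x = 0 := by
          rw [P1 x]
          rw [Finset.card_eq_zero, Finset.filter_eq_empty_iff]
          intro j hj
          have := P2 j (Finset.mem_range.1 hj)
          omega
        omega
      exact ⟨by omega, hx9, hxc⟩
    obtain ⟨ha2, ha9, hca⟩ := hprop a ha
    obtain ⟨hb2, hb9, hcb⟩ := hprop b hb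
    obtain ⟨he2, he9, hce⟩ := hprop e he
    exact autobio_caseB (fun v => L.count v) a b e star' hab hae hbe
      ha2 ha9 hca hb2 hb9 hcb he2 he9 hce hz1 P3 hz9 (occ 0 (by omega))
end

section
/- If a positive natural number N is autobiographical and the digit 1 does not occur in the base-10 representation of N, then N = 2020. -/
lemma my_sum_count_le (s : Finset ℕ) (l : List ℕ) : ∑ i ∈ s, l.count i ≤ l.length := by
  induction l with
  | nil => simp
  | cons a t ih =>
    simp only [List.count_cons, List.length_cons, beq_iff_eq]
    rw [Finset.sum_add_distrib]
    have h : (∑ i ∈ s, if a = i then 1 else 0) ≤ 1 := by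
      rw [Finset.sum_ite_eq s a (fun _ => 1)]
      split <;> simp
    omega

lemma my_length_eq (l : List ℕ) (h : ∀ x ∈ l, x < 10) :
    l.length = ∑ i ∈ Finset.range 10, l.count i := by
  induction l with
  | nil => simp
  | cons a t ih =>
    have ha : a < 10 := h a (by simp)
    simp only [List.count_cons, List.length_cons, beq_iff_eq]
    rw [Finset.sum_add_distrib, Finset.sum_ite_eq (Finset.range 10) a (fun _ => 1)]
    rw [ih (fun x hx => h x (by simp [hx]))]
    simp [Finset.mem_range.mpr ha]

lemma my_sum_eq (l : List ℕ) (h : ∀ x ∈ l, x < 10) :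
    l.sum = ∑ i ∈ Finset.range 10, i * l.count i := by
  induction l with
  | nil => simp
  | cons a t ih =>
    have ha : a < 10 := h a (by simp)
    simp only [List.count_cons, List.sum_cons, Nat.mul_add, beq_iff_eq]
    rw [Finset.sum_add_distrib]
    have h2 : (∑ i ∈ Finset.range 10, i * if a = i then 1 else 0) = a := by
      have : ∀ i, (i * if a = i then 1 else 0) = if a = i then a else 0 := by
        intro i; split <;> simp_all
      simp only [this]
      rw [Finset.sum_ite_eq (Finset.range 10) a (fun _ => a)]
      simp [Finset.mem_range.mpr ha]
    rw [ih (fun x hx => h x (by simp [hx])), h2]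
    omega

lemma my_sum_getD (l : List ℕ) : l.sum = ∑ i ∈ Finset.range l.length, l.getD i 0 := by
  induction l with
  | nil => simp
  | cons a t ih =>
    simp only [List.sum_cons, List.length_cons, Finset.sum_range_succ']
    simp only [List.getD_cons_succ, List.getD_cons_zero]
    omega

lemma my_ext (R : List ℕ) (hk : R.length = 4) (h0 : R.getD 0 0 = 2)
    (h1 : R.getD 1 0 = 0) (h2 : R.getD 2 0 = 2) (h3 : R.getD 3 0 = 0) :
    R = [2, 0, 2, 0] := by
  rcases R with _ | ⟨a, _ | ⟨b, _ | ⟨c, _ | ⟨d, _ | ⟨e, t⟩⟩⟩⟩⟩ <;> simp_all [List.getD]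

lemma my_main_list (R : List ℕ) (hne : R ≠ [])
    (hlt : ∀ x ∈ R, x < 10) (hhead : R.getD 0 0 ≠ 0)
    (hA : ∀ i < R.length, R.getD i 0 = R.count i) (h1 : 1 ∉ R) :
    R = [2, 0, 2, 0] := by
  have hpos : 0 < R.length := List.length_pos_iff.mpr hne
  have hne1 : ∀ x ∈ R, x ≠ 1 := fun x hx hx1 => h1 (hx1 ▸ hx)
  have hc1 : R.count 1 = 0 := List.count_eq_zero_of_not_mem h1
  have hklen : R.length = ∑ i ∈ Finset.range 10, R.count i := my_length_eq R hlt
  have hSsum : R.sum = ∑ i ∈ Finset.range 10, i * R.count i := my_sum_eq R hlt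
  have hScount : R.sum = ∑ i ∈ Finset.range R.length, R.count i := by
    rw [my_sum_getD R]
    exact Finset.sum_congr rfl (fun i hi => hA i (Finset.mem_range.mp hi))
  have hSle : R.sum ≤ R.length := by
    rw [hScount]; exact my_sum_count_le _ R
  have key : ∀ j, 0 < R.count j → j < R.length → 2 ≤ R.count j := by
    intro j hj hjk
    have h := hA j hjk
    have mem : R.getD j 0 ∈ R := by
      rw [List.getD_eq_getElem _ _ hjk]; exact List.getElem_mem _
    have hne' := hne1 _ mem
    omega
  obtain ⟨d0, hd0def⟩ : ∃ d0, R.getD 0 0 = d0 := ⟨_, rfl⟩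
  have hd0mem : d0 ∈ R := by
    rw [← hd0def, List.getD_eq_getElem _ _ hpos]; exact List.getElem_mem _
  have hd0lt : d0 < 10 := hlt _ hd0mem
  have hd0ne1 : d0 ≠ 1 := hne1 _ hd0mem
  have hd0ne0 : d0 ≠ 0 := hd0def ▸ hhead
  have hc0 : R.count 0 = d0 := by rw [← hd0def]; exact (hA 0 hpos).symm
  have hcnt_pos : 0 < R.count d0 := List.count_pos_iff.mpr hd0mem
  have hd0ltk : d0 < R.length := by
    have hp : R.count 0 + R.count d0 ≤ R.length := by
      have := my_sum_count_le {0, d0} R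
      rwa [Finset.sum_pair (by omega : (0:ℕ) ≠ d0)] at this
    omega
  have hcd0 : 2 ≤ R.count d0 := key d0 hcnt_pos hd0ltk
  have hd0ge2 : 2 ≤ d0 := by omega
  simp only [Finset.sum_range_succ, Finset.sum_range_zero] at hklen hSsum
  interval_cases d0 <;> [skip; omega; omega; omega; omega; omega; omega; omega]
  -- now d0 = 2
  have hk4 : R.length = 4 := by omega
  have hg0 : R.getD 0 0 = 2 := hd0def
  have hg1 : R.getD 1 0 = 0 := by rw [hA 1 (by omega)]; omega
  have hg2 : R.getD 2 0 = 2 := by rw [hA 2 (by omega)]; omega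
  have hg3 : R.getD 3 0 = 0 := by rw [hA 3 (by omega)]; omega
  exact my_ext R hk4 hg0 hg1 hg2 hg3


theorem autobiographical_no_ones (N : ℕ) (hN : 0 < N)
    (hA : Autobiographical N) (h1 : 1 ∉ Nat.digits 10 N) :
    N = 2020 := by
  rw [Autobiographical] at hA
  simp only [msdDigits] at hA
  have hNne : N ≠ 0 := hN.ne'
  have hLne : Nat.digits 10 N ≠ [] := Nat.digits_ne_nil_iff_ne_zero.mpr hNne
  have hRne : (Nat.digits 10 N).reverse ≠ [] := by simpa using hLne
  have hRpos : 0 < (Nat.digits 10 N).reverse.length := List.length_pos_iff.mpr hRne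
  have hlt : ∀ x ∈ (Nat.digits 10 N).reverse, x < 10 := by
    intro x hx
    exact Nat.digits_lt_base (by norm_num) (List.mem_reverse.mp hx)
  have hhead : (Nat.digits 10 N).reverse.getD 0 0 ≠ 0 := by
    have hlast := Nat.getLast_digit_ne_zero 10 hNne
    rw [List.getLast_eq_getElem] at hlast
    rw [List.getD_eq_getElem _ _ hRpos, List.getElem_reverse]
    simpa using hlast
  have h1' : 1 ∉ (Nat.digits 10 N).reverse := by simpa using h1
  have hrev := my_main_list _ hRne hlt hhead hA h1'
  have hdig : Nat.digits 10 N = [0, 2, 0, 2] := by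
    have := congrArg List.reverse hrev
    simpa using this
  have := Nat.ofDigits_digits 10 N
  rw [hdig] at this
  simp [Nat.ofDigits] at this
  omega
end

section
/- Let N be a positive natural number and let L be its base-10 digit string. Then L fails to admit an infinite sequence of CVs if and only if at least one of the following holds: (1) some digit is repeated more than 9 times in N; (2) there is some x ≥ 1 such that each of the ten digits 0, 1, …, 9 occurs exactly x times in N; (3) the digit 9 occurs at least once in N and the ten multiplicities with which the digits 0, 1, …, 9 occur in N are precisely the numbers 0, 1, …, 9 in some order. -/
/-- A digit string is a nonempty finite list of natural numbers, each at most 9,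
read most-significant-first. -/
def DigitString (L : List ℕ) : Prop := L ≠ [] ∧ ∀ d ∈ L, d ≤ 9

/-- The curriculum vitae of `L`: the digit string of length `m + 1`, where `m` is the
largest entry of `L`, whose `i`-th entry (0-indexed) counts the occurrences of `i` in `L`. -/
def CV (L : List ℕ) : List ℕ :=
  (List.range (L.foldr max 0 + 1)).map (fun i => L.count i)

/-- The sequence of CVs of `L`: `CVseq L 0 = L` and `CVseq L (n+1) = CV (CVseq L n)`. -/
def CVseq (L : List ℕ) : ℕ → List ℕ
  | 0 => L
  | n + 1 => CV (CVseq L n)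

/-- `L` admits an infinite sequence of CVs: for every `n`, each value occurs at most
9 times in `CVseq L n` (so the next CV is defined). -/
def AdmitsCVs (L : List ℕ) : Prop := ∀ n, ∀ d, (CVseq L n).count d ≤ 9

/-- The complete life story of `L`: the digit string of length 10 whose `i`-th entry
(0-indexed, `0 ≤ i ≤ 9`) counts the occurrences of `i` in `L`. -/
def CLS (L : List ℕ) : List ℕ := (List.range 10).map (fun i => L.count i)

/-- The sequence of life stories of `L`. -/
def CLSseq (L : List ℕ) : ℕ → List ℕ
  | 0 => L
  | n + 1 => CLS (CLSseq L n)

/-- `L` admits an infinite sequence of life stories: for every `n`, each value occurs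
at most 9 times in `CLSseq L n`. -/
def AdmitsCLSs (L : List ℕ) : Prop := ∀ n, ∀ d, (CLSseq L n).count d ≤ 9

/-- The height of a digit string: the maximum of (its largest entry plus 1) and its length. -/
def height (L : List ℕ) : ℕ := max (L.foldr max 0 + 1) L.length

namespace CVAux

lemma foldr_max_le {l : List ℕ} {b : ℕ} (h : ∀ a ∈ l, a ≤ b) : l.foldr max 0 ≤ b := by
  induction l with
  | nil => simp
  | cons a t ih =>
    simp only [List.foldr_cons]
    exact max_le (h a (by simp)) (ih fun x hx => h x (List.mem_cons_of_mem _ hx))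

lemma le_foldr_max {l : List ℕ} {a : ℕ} (h : a ∈ l) : a ≤ l.foldr max 0 := by
  induction l with
  | nil => simp at h
  | cons b t ih =>
    rcases List.mem_cons.mp h with rfl | h
    · exact le_max_left _ _
    · exact le_trans (ih h) (le_max_right _ _)

lemma foldr_max_mem {l : List ℕ} (h : 0 < l.foldr max 0) : l.foldr max 0 ∈ l := by
  induction l with
  | nil => simp at h
  | cons b t ih =>
    simp only [List.foldr_cons] at h ⊢
    rcases le_or_gt (t.foldr max 0) b with hb | hb
    · rw [max_eq_left hb]; exact List.mem_cons_self
    · rw [max_eq_right hb.le]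
      exact List.mem_cons_of_mem _ (ih (Nat.lt_of_le_of_lt (Nat.zero_le _) hb))

lemma count_range' {n a : ℕ} (h : a < n) : (List.range n).count a = 1 :=
  List.count_eq_one_of_mem List.nodup_range (List.mem_range.mpr h)

lemma sum_counts {n : ℕ} {l : List ℕ} (h : ∀ a ∈ l, a < n) :
    ((List.range n).map l.count).sum = l.length := by
  have key : ((List.range n).map l.count).sum = ∑ i ∈ Finset.range n, l.count i := rfl
  rw [key]
  clear key
  induction l with
  | nil => simp
  | cons a t ih =>
    have ht := ih fun x hx => h x (List.mem_cons_of_mem _ hx)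
    have ha : a ∈ Finset.range n := Finset.mem_range.mpr (h a (by simp))
    simp only [List.count_cons, List.length_cons]
    rw [Finset.sum_add_distrib, ht]
    simp only [beq_iff_eq]
    rw [Finset.sum_ite_eq (Finset.range n) a (fun _ => 1), if_pos ha]

lemma length_CV (M : List ℕ) : (CV M).length = M.foldr max 0 + 1 := by
  simp [CV]

lemma mem_CV {M : List ℕ} {a : ℕ} (h : a ∈ CV M) : ∃ i, a = M.count i := by
  obtain ⟨i, -, rfl⟩ := List.mem_map.mp h
  exact ⟨i, rfl⟩

lemma count_mem_CV {M : List ℕ} {i : ℕ} (hi : i ≤ M.foldr max 0) : M.count i ∈ CV M :=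
  List.mem_map.mpr ⟨i, List.mem_range.mpr (by omega), rfl⟩

lemma CV_of_max9 {M : List ℕ} (h : M.foldr max 0 = 9) :
    CV M = (List.range 10).map (fun i => M.count i) := by
  rw [CV, h]

lemma foldr_max_eq_nine {M : List ℕ} (h9 : 9 ∈ M) (hb : ∀ a ∈ M, a ≤ 9) :
    M.foldr max 0 = 9 :=
  le_antisymm (foldr_max_le hb) (le_foldr_max h9)

/-- If `M` has all entries ≤ 9 and some count in `CV M` exceeds 9, then `CV M` is
constant equal to `d`, of length 10, and we extract the key facts. -/
lemma step {M : List ℕ} {d : ℕ} (hMent : ∀ a ∈ M, a ≤ 9)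
    (hd : 9 < (CV M).count d) :
    M.foldr max 0 = 9 ∧ (∀ i < 10, M.count i = d) ∧ 9 ∈ M ∧ 1 ≤ d := by
  have hlen : (CV M).length = M.foldr max 0 + 1 := length_CV M
  have hfle : M.foldr max 0 ≤ 9 := foldr_max_le hMent
  have hcle : (CV M).count d ≤ (CV M).length := List.count_le_length
  have hf9 : M.foldr max 0 = 9 := by omega
  have hall : ∀ b ∈ CV M, b = d :=
    fun b hbb => (List.count_eq_length.mp (by omega) b hbb).symm
  have hcnt : ∀ i < 10, M.count i = d := fun i hi =>
    hall _ (count_mem_CV (by omega))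
  have h9M : 9 ∈ M := by
    have := foldr_max_mem (l := M) (by omega)
    rwa [hf9] at this
  have hd1 : 1 ≤ d := by
    have : 0 < M.count 9 := List.count_pos_iff.mpr h9M
    rw [hcnt 9 (by omega)] at this
    exact this
  exact ⟨hf9, hcnt, h9M, hd1⟩

lemma length_eq_of_counts_const {M : List ℕ} {d : ℕ} (hMent : ∀ a ∈ M, a ≤ 9)
    (hcnt : ∀ i < 10, M.count i = d) : M.length = 10 * d := by
  have hsum : ((List.range 10).map M.count).sum = M.length :=
    sum_counts (fun a ha => by have := hMent a ha; omega)
  have hrep : (List.range 10).map M.count = List.replicate 10 d := by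
    apply List.eq_replicate_of_mem
    intro b hbb
    obtain ⟨i, hi, rfl⟩ := List.mem_map.mp hbb
    exact hcnt i (List.mem_range.mp hi)
  rw [← hsum, hrep, List.sum_replicate, smul_eq_mul]

lemma perm_of_counts_one {M : List ℕ} (hMent : ∀ a ∈ M, a ≤ 9)
    (hcnt : ∀ i < 10, M.count i = 1) : M.Perm (List.range 10) := by
  rw [List.perm_iff_count]
  intro a
  rcases lt_or_ge a 10 with ha | ha
  · rw [hcnt a ha, count_range' ha]
  · rw [List.count_eq_zero.mpr, List.count_eq_zero.mpr]
    · simp; omega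
    · intro hmem
      have := hMent a hmem
      omega

theorem main {L : List ℕ} (hb : ∀ a ∈ L, a ≤ 9) :
    ¬ AdmitsCVs L ↔
      (∃ d, 9 < L.count d) ∨
        (∃ x, 1 ≤ x ∧ ∀ d < 10, L.count d = x) ∨
          (9 ∈ L ∧
            ((List.range 10).map (fun i => L.count i)).Perm (List.range 10)) := by
  constructor
  · intro hA
    have hex : ∃ n, ∃ d, 9 < (CVseq L n).count d := by
      by_contra hc
      push_neg at hc
      exact hA fun n d => hc n d
    classical
    obtain ⟨n, ⟨d, hd⟩, hmin⟩ :
        ∃ n, (∃ d, 9 < (CVseq L n).count d) ∧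
          ∀ m < n, ∀ e, (CVseq L m).count e ≤ 9 := by
      refine ⟨Nat.find hex, Nat.find_spec hex, fun m hm e => ?_⟩
      have := Nat.find_min hex hm
      push_neg at this
      exact this e
    have hent : ∀ m < n, ∀ a ∈ CVseq L m, a ≤ 9 := by
      intro m hm a ha
      match m with
      | 0 => exact hb a ha
      | k + 1 =>
        obtain ⟨i, rfl⟩ := mem_CV (M := CVseq L k) ha
        exact hmin k (by omega) i
    rcases n with _ | k
    · exact Or.inl ⟨d, hd⟩
    have hdk : 9 < (CV (CVseq L k)).count d := hd
    obtain ⟨hf9, hcnt, h9M, hd1⟩ := step (hent k (by omega)) hdk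
    rcases k with _ | j
    · -- n = 1 : condition (2)
      exact Or.inr (Or.inl ⟨d, hd1, fun i hi => hcnt i hi⟩)
    -- n ≥ 2 : the failing string's predecessor M = CV P
    have hPent : ∀ a ∈ CVseq L j, a ≤ 9 := hent j (by omega)
    have hMent : ∀ a ∈ CVseq L (j + 1), a ≤ 9 := hent (j + 1) (by omega)
    have hMlen : (CVseq L (j + 1)).length = (CVseq L j).foldr max 0 + 1 :=
      length_CV (CVseq L j)
    have hPfle : (CVseq L j).foldr max 0 ≤ 9 := foldr_max_le hPent
    have hlen10 : (CVseq L (j + 1)).length = 10 * d :=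
      length_eq_of_counts_const hMent hcnt
    have hd1' : d = 1 := by omega
    subst hd1'
    have hPf9 : (CVseq L j).foldr max 0 = 9 := by omega
    have h9P : 9 ∈ CVseq L j := by
      have := foldr_max_mem (l := CVseq L j) (by omega)
      rwa [hPf9] at this
    have hMperm : (CVseq L (j + 1)).Perm (List.range 10) :=
      perm_of_counts_one hMent hcnt
    have hMeq : CVseq L (j + 1) =
        (List.range 10).map (fun i => (CVseq L j).count i) :=
      CV_of_max9 hPf9
    rcases j with _ | i
    · -- n = 2 : condition (3)
      refine Or.inr (Or.inr ⟨h9P, ?_⟩)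
      have : ((List.range 10).map (fun i => (CVseq L 0).count i)).Perm (List.range 10) := by
        rw [← hMeq]; exact hMperm
      exact this
    · -- n ≥ 3 : contradiction
      exfalso
      have hQent : ∀ a ∈ CVseq L i, a ≤ 9 := hent i (by omega)
      have hPlen : (CVseq L (i + 1)).length = (CVseq L i).foldr max 0 + 1 :=
        length_CV (CVseq L i)
      have hQfle : (CVseq L i).foldr max 0 ≤ 9 := foldr_max_le hQent
      have hPsum : ((List.range 10).map (CVseq L (i + 1)).count).sum
          = (CVseq L (i + 1)).length :=
        sum_counts (fun a ha => by have := hPent a ha; omega)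
      have h45 : ((List.range 10).map (CVseq L (i + 1)).count).sum
          = (List.range 10).sum := by
        have hp : ((List.range 10).map (fun x => (CVseq L (i + 1)).count x)).Perm
            (List.range 10) := by
          rw [← hMeq]; exact hMperm
        exact hp.sum_eq
      have h45' : (List.range 10).sum = 45 := by decide
      omega
  · rintro (⟨d, hd⟩ | ⟨x, hx1, hx⟩ | ⟨h9, hperm⟩) hA
    · exact absurd (hA 0 d) (by simpa [CVseq] using hd.not_ge)
    · have h9L : 9 ∈ L := List.count_pos_iff.mp (by rw [hx 9 (by omega)]; omega)
      have hf9 : L.foldr max 0 = 9 := foldr_max_eq_nine h9L hb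
      have h1 : CVseq L 1 = List.replicate 10 x := by
        show CV L = _
        rw [CV_of_max9 hf9]
        apply List.eq_replicate_of_mem
        intro b hbb
        obtain ⟨i, hi, rfl⟩ := List.mem_map.mp hbb
        exact hx i (List.mem_range.mp hi)
      have := hA 1 x
      rw [h1, List.count_replicate_self] at this
      omega
    · have hf9 : L.foldr max 0 = 9 := foldr_max_eq_nine h9 hb
      have h1 : CVseq L 1 = (List.range 10).map (fun i => L.count i) := by
        show CV L = _
        exact CV_of_max9 hf9
      have h9M : (9 : ℕ) ∈ (List.range 10).map (fun i => L.count i) :=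
        hperm.mem_iff.mpr (by simp)
      have hMb : ∀ a ∈ (List.range 10).map (fun i => L.count i), a ≤ 9 := by
        intro a ha
        have := hperm.mem_iff.mp ha
        simp only [List.mem_range] at this
        omega
      have hMf9 : ((List.range 10).map (fun i => L.count i)).foldr max 0 = 9 :=
        foldr_max_eq_nine h9M hMb
      have hMcnt : ∀ i < 10, ((List.range 10).map (fun i => L.count i)).count i = 1 := by
        intro i hi
        rw [hperm.count_eq, count_range' hi]
      have h2 : CVseq L 2 = List.replicate 10 1 := by
        show CV (CVseq L 1) = _
        rw [h1, CV_of_max9 hMf9]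
        apply List.eq_replicate_of_mem
        intro b hbb
        obtain ⟨i, hi, rfl⟩ := List.mem_map.mp hbb
        exact hMcnt i (List.mem_range.mp hi)
      have := hA 2 1
      rw [h2, List.count_replicate_self] at this
      omega

end CVAux

theorem not_admitsCVs_iff (N : ℕ) (hN : 0 < N) (L : List ℕ)
    (hL : L = (Nat.digits 10 N).reverse) :
    ¬ AdmitsCVs L ↔
      (∃ d, 9 < L.count d) ∨
        (∃ x, 1 ≤ x ∧ ∀ d < 10, L.count d = x) ∨
          (9 ∈ L ∧
            ((List.range 10).map (fun i => L.count i)).Perm (List.range 10)) := by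
  apply CVAux.main
  intro a ha
  rw [hL, List.mem_reverse] at ha
  have := Nat.digits_lt_base (by norm_num) ha
  omega
end

section
/- Let N be a positive natural number and let L be its base-10 digit string. Then L fails to admit an infinite sequence of life stories if and only if at least one of the following holds: (1) some digit is repeated more than 9 times in N; (2) there is some x ≥ 1 such that each of the ten digits 0, 1, …, 9 occurs exactly x times in N; (3) the ten multiplicities with which the digits 0, 1, …, 9 occur in N are precisely the numbers 0, 1, …, 9 in some order. -/
lemma aux_sum_map_range (n : ℕ) (f : ℕ → ℕ) :
    ((List.range n).map f).sum = ∑ i ∈ Finset.range n, f i := by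
  induction n with
  | zero => simp
  | succ k ih => rw [List.range_succ, Finset.sum_range_succ]; simp [ih]

lemma aux_count_range (a n : ℕ) : (List.range n).count a = if a < n then 1 else 0 := by
  by_cases h : a < n
  · simp [h, List.count_eq_one_of_mem List.nodup_range (List.mem_range.mpr h)]
  · simp only [h, if_false]
    exact List.count_eq_zero.mpr (fun hm => h (List.mem_range.mp hm))

lemma aux_len_sum (Q : List ℕ) (h : ∀ d ∈ Q, d ≤ 9) :
    ∑ i ∈ Finset.range 10, Q.count i = Q.length := by
  induction Q with
  | nil => simp
  | cons a t ih =>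
    simp only [List.count_cons, List.length_cons]
    rw [Finset.sum_add_distrib, ih (fun d hd => h d (by simp [hd]))]
    have ha : a < 10 := by have := h a (by simp); omega
    have : (∑ i ∈ Finset.range 10, if (a == i) = true then 1 else 0) = 1 := by
      simp only [beq_iff_eq]
      rw [Finset.sum_ite_eq (Finset.range 10) a (fun _ => 1)]
      simp [Finset.mem_range.mpr ha]
    omega

lemma CLS_length (Q : List ℕ) : (CLS Q).length = 10 := by simp [CLS]

lemma CLS_sum (Q : List ℕ) (h : ∀ d ∈ Q, d ≤ 9) : (CLS Q).sum = Q.length := by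
  rw [CLS, aux_sum_map_range]; exact aux_len_sum Q h

lemma CLS_all_one_iff (Q : List ℕ) (h : ∀ d ∈ Q, d ≤ 9) :
    (∀ b ∈ CLS Q, b = 1) ↔ Q.Perm (List.range 10) := by
  constructor
  · intro hb
    rw [List.perm_iff_count]
    intro a
    rw [aux_count_range]
    by_cases ha : a < 10
    · simp only [ha, if_true]
      exact hb _ (by simp [CLS]; exact ⟨a, ha, rfl⟩)
    · simp only [ha, if_false]
      exact List.count_eq_zero.mpr (fun hm => ha (by have := h a hm; omega))
  · intro hp b hb
    simp only [CLS, List.mem_map, List.mem_range] at hb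
    obtain ⟨i, hi, rfl⟩ := hb
    rw [List.perm_iff_count.mp hp i, aux_count_range]
    simp [hi]

def Inv' (Q : List ℕ) : Prop :=
  Q.length = 10 ∧ (∀ d ∈ Q, d ≤ 9) ∧ Q.sum = 10 ∧ (¬ ∀ b ∈ Q, b = 1) ∧
    ¬ Q.Perm (List.range 10)

lemma Inv'_count (Q : List ℕ) (hI : Inv' Q) (d : ℕ) : Q.count d ≤ 9 := by
  obtain ⟨hlen, _, hsum, hone, _⟩ := hI
  by_contra hc
  have h10 : Q.count d = 10 := by
    have : Q.count d ≤ Q.length := List.count_le_length; omega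
  have hall : ∀ b ∈ Q, d = b := List.count_eq_length.mp (by omega)
  have hrep : Q = List.replicate 10 d :=
    List.eq_replicate_iff.mpr ⟨hlen, fun b hb => (hall b hb).symm⟩
  have : Q.sum = 10 * d := by rw [hrep, List.sum_replicate]; simp
  have hd1 : d = 1 := by omega
  exact hone (fun b hb => (hall b hb).symm.trans (by rw [hd1]))

lemma Inv'_step (Q : List ℕ) (hI : Inv' Q) : Inv' (CLS Q) := by
  obtain ⟨hlen, hle, hsum, hone, hperm⟩ := hI
  refine ⟨CLS_length Q, ?_, ?_, ?_, ?_⟩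
  · intro d hd
    simp only [CLS, List.mem_map, List.mem_range] at hd
    obtain ⟨i, _, rfl⟩ := hd
    exact Inv'_count Q ⟨hlen, hle, hsum, hone, hperm⟩ i
  · rw [CLS_sum Q hle, hlen]
  · intro hall
    exact hperm ((CLS_all_one_iff Q hle).mp hall)
  · intro hp
    have h1 : (CLS Q).sum = 10 := by rw [CLS_sum Q hle, hlen]
    have h2 : (List.range 10).sum = 45 := by decide
    have := hp.sum_eq
    omega


theorem not_admitsCLSs_iff (N : ℕ) (hN : 0 < N) (L : List ℕ)
    (hL : L = (Nat.digits 10 N).reverse) :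
    ¬ AdmitsCLSs L ↔
      (∃ d, 9 < L.count d) ∨
        (∃ x, 1 ≤ x ∧ ∀ d < 10, L.count d = x) ∨
          ((List.range 10).map (fun i => L.count i)).Perm (List.range 10) := by
  have hne : L ≠ [] := by
    rw [hL]
    simp only [ne_eq, List.reverse_eq_nil_iff]
    exact Nat.digits_ne_nil_iff_ne_zero.mpr (by omega)
  have hd9 : ∀ d ∈ L, d ≤ 9 := by
    intro d hd
    rw [hL, List.mem_reverse] at hd
    have := Nat.digits_lt_base (by norm_num) hd
    omega
  constructor
  · -- contrapositive: no case holds → admits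
    intro hnA
    by_contra hc
    push_neg at hc
    obtain ⟨h1, h2, h3⟩ := hc
    apply hnA
    -- counts of CLS L are ≤ 9
    have hA : ∀ d, (CLS L).count d ≤ 9 := by
      intro d
      by_contra hcc
      have h10 : (CLS L).count d = 10 := by
        have : (CLS L).count d ≤ (CLS L).length := List.count_le_length
        rw [CLS_length] at this; omega
      have hall : ∀ b ∈ CLS L, d = b :=
        List.count_eq_length.mp (by rw [CLS_length]; omega)
      have hcnt : ∀ i < 10, L.count i = d := by
        intro i hi
        exact (hall _ (by simp only [CLS, List.mem_map, List.mem_range]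
                          exact ⟨i, hi, rfl⟩)).symm
      rcases Nat.eq_zero_or_pos d with hd0 | hdp
      · obtain ⟨b, hb⟩ := List.exists_mem_of_ne_nil L hne
        have hb9 : b ≤ 9 := hd9 b hb
        have : L.count b = 0 := by have := hcnt b (by omega); omega
        exact absurd this (by simpa [List.count_eq_zero] using hb)
      · obtain ⟨i, hi, hne'⟩ := h2 d hdp
        exact hne' (hcnt i hi)
    -- invariant at step 2
    have hB : Inv' (CLS (CLS L)) := by
      refine ⟨CLS_length _, ?_, ?_, ?_, ?_⟩
      · intro d hd
        simp only [CLS, List.mem_map, List.mem_range] at hd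
        obtain ⟨i, _, rfl⟩ := hd
        exact hA i
      · rw [CLS_sum _ (fun d hd => by
          simp only [CLS, List.mem_map, List.mem_range] at hd
          obtain ⟨i, _, rfl⟩ := hd
          exact (h1 i)), CLS_length]
      · intro hall
        exact h3 ((CLS_all_one_iff (CLS L) (fun d hd => by
          simp only [CLS, List.mem_map, List.mem_range] at hd
          obtain ⟨i, _, rfl⟩ := hd
          exact (h1 i))).mp hall)
      · intro hp
        have hs : (CLS (CLS L)).sum = 10 := by
          rw [CLS_sum _ (fun d hd => by
            simp only [CLS, List.mem_map, List.mem_range] at hd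
            obtain ⟨i, _, rfl⟩ := hd
            exact (h1 i)), CLS_length]
        have := hp.sum_eq
        have h45 : (List.range 10).sum = 45 := by decide
        omega
    have key : ∀ k, Inv' (CLSseq L (k + 2)) := by
      intro k
      induction k with
      | zero => exact hB
      | succ m ih => exact Inv'_step _ ih
    intro n d
    match n with
    | 0 => exact h1 d
    | 1 => exact hA d
    | (k + 2) => exact Inv'_count _ (key k) d
  · -- cases → not admits
    intro h hadm
    rcases h with ⟨d, hd⟩ | ⟨x, hx1, hx⟩ | hp
    · have := hadm 0 d
      simp only [CLSseq] at this
      omega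
    · have hall : ∀ b ∈ CLS L, x = b := by
        intro b hb
        simp only [CLS, List.mem_map, List.mem_range] at hb
        obtain ⟨i, hi, rfl⟩ := hb
        exact (hx i hi).symm
      have : (CLS L).count x = 10 := by
        rw [List.count_eq_length.mpr hall, CLS_length]
      have := hadm 1 x
      simp only [CLSseq] at this
      omega
    · have hp' : (CLS L).Perm (List.range 10) := hp
      have hall : ∀ b ∈ CLS (CLS L), b = 1 := by
        intro b hb
        simp only [CLS, List.mem_map, List.mem_range] at hb
        obtain ⟨i, hi, rfl⟩ := hb
        rw [List.perm_iff_count.mp hp i, aux_count_range]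
        simp [hi]
      have : (CLS (CLS L)).count 1 = 10 := by
        rw [List.count_eq_length.mpr (fun b hb => (hall b hb).symm), CLS_length]
      have := hadm 2 1
      simp only [CLSseq] at this
      omega
end

section
/- Let L be a digit string admitting an infinite sequence of CVs. Then for every n ≥ 1 the digit string CV_n(L) has at most 10 entries, and for every n ≥ 2 the sum of the entries of CV_n(L) is at most 10. -/
lemma sum_map_count (N : ℕ) (M : List ℕ) (h : ∀ a ∈ M, a < N) :
    ((List.range N).map (fun i => M.count i)).sum = M.length := by
  induction M with
  | nil => simp
  | cons a t ih =>
    have ha : a < N := h a (by simp)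
    have ht : ∀ x ∈ t, x < N := fun x hx => h x (by simp [hx])
    simp only [List.count_cons, List.sum_map_add, ih ht, List.length_cons]
    congr 1
    have := List.sum_map_eq_nsmul_single a (fun i => if (a == i) = true then 1 else 0)
      (fun i hne _ => by simp [Ne.symm hne]) (l := List.range N)
    rw [this]
    simp [ha, List.count_eq_one_of_mem List.nodup_range (List.mem_range.2 ha)]

lemma mem_le_foldr_max (M : List ℕ) (a : ℕ) (ha : a ∈ M) : a ≤ M.foldr max 0 := by
  induction M with
  | nil => simp at ha
  | cons b t ih =>
    rcases List.mem_cons.1 ha with rfl | h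
    · simp [List.foldr_cons]
    · exact le_trans (ih h) (by simp [List.foldr_cons])

lemma foldr_max_le (M : List ℕ) (h : ∀ d ∈ M, d ≤ 9) : M.foldr max 0 ≤ 9 := by
  induction M with
  | nil => simp
  | cons b t ih =>
    simp only [List.foldr_cons, max_le_iff]
    exact ⟨h b (by simp), ih fun d hd => h d (by simp [hd])⟩

lemma cvseq_entries (L : List ℕ) (hL : DigitString L) (h : AdmitsCVs L) :
    ∀ n, ∀ d ∈ CVseq L n, d ≤ 9 := by
  intro n
  cases n with
  | zero => exact hL.2
  | succ k =>
    intro d hd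
    simp only [CVseq, CV, List.mem_map] at hd
    obtain ⟨i, _, rfl⟩ := hd
    exact h k i

theorem cvseq_length_and_sum (L : List ℕ) (hL : DigitString L) (h : AdmitsCVs L) :
    (∀ n, 1 ≤ n → (CVseq L n).length ≤ 10) ∧
      (∀ n, 2 ≤ n → (CVseq L n).sum ≤ 10) := by
  have hlen : ∀ n, 1 ≤ n → (CVseq L n).length ≤ 10 := by
    intro n hn
    obtain ⟨k, rfl⟩ := Nat.exists_eq_add_of_le' hn
    have := foldr_max_le (CVseq L k) (cvseq_entries L hL h k)
    show (CV (CVseq L k)).length ≤ 10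
    simp only [CV, List.length_map, List.length_range]
    omega
  refine ⟨hlen, ?_⟩
  intro n hn
  obtain ⟨k, rfl⟩ := Nat.exists_eq_add_of_le' hn
  show (CV (CVseq L (k + 1))).sum ≤ 10
  have hsum : (CV (CVseq L (k + 1))).sum = (CVseq L (k + 1)).length := by
    apply sum_map_count
    intro a ha
    exact Nat.lt_succ_of_le (mem_le_foldr_max _ a ha)
  rw [hsum]
  exact hlen (k + 1) (by omega)
end

section
/- Let L be a digit string admitting an infinite sequence of CVs. Then for every n ≥ 3, if all entries of the digit string CV_n(L) are equal, then CV_n(L) has length at most 5. -/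
lemma le_foldr_max {X : List ℕ} {a : ℕ} (ha : a ∈ X) : a ≤ X.foldr max 0 := by
  induction X with
  | nil => simp at ha
  | cons b t ih =>
    rcases List.mem_cons.1 ha with rfl | ha
    · simp
    · exact le_trans (ih ha) (le_max_right _ _)

lemma foldr_max_mem {X : List ℕ} (hX : X ≠ []) : X.foldr max 0 ∈ X := by
  induction X with
  | nil => simp at hX
  | cons b t ih =>
    rcases eq_or_ne t [] with rfl | ht
    · simp
    · rcases max_cases b (t.foldr max 0) with ⟨h1, _⟩ | ⟨h1, _⟩
      · simp [h1]
      · simp only [List.foldr_cons, h1]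
        exact List.mem_cons_of_mem _ (ih ht)

lemma foldr_max_le_s10 {X : List ℕ} {k : ℕ} (h : ∀ a ∈ X, a ≤ k) : X.foldr max 0 ≤ k := by
  induction X with
  | nil => simp
  | cons b t ih =>
    simp only [List.foldr_cons, max_le_iff]
    exact ⟨h b (by simp), ih fun a ha => h a (List.mem_cons_of_mem _ ha)⟩

lemma count_sum (X : List ℕ) (N : ℕ) (h : ∀ a ∈ X, a < N) :
    ∑ i ∈ Finset.range N, X.count i = X.length := by
  induction X with
  | nil => simp
  | cons b t ih =>
    have hb : b ∈ Finset.range N := Finset.mem_range.2 (h b (by simp))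
    simp only [List.count_cons, List.length_cons]
    rw [Finset.sum_add_distrib, ih (fun a ha => h a (List.mem_cons_of_mem _ ha))]
    simp [Finset.sum_ite_eq' (Finset.range N) b, hb]

lemma weighted_sum (X : List ℕ) (N : ℕ) (h : ∀ a ∈ X, a < N) :
    ∑ i ∈ Finset.range N, i * X.count i = X.sum := by
  induction X with
  | nil => simp
  | cons b t ih =>
    have hb : b ∈ Finset.range N := Finset.mem_range.2 (h b (by simp))
    simp only [List.count_cons, List.sum_cons]
    have : ∀ i ∈ Finset.range N, i * (t.count i + if b == i then 1 else 0)
        = i * t.count i + (if b = i then i else 0) := by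
      intro i _
      rcases eq_or_ne b i with rfl | hne
      · simp [Nat.mul_add]
      · simp [hne]
    rw [Finset.sum_congr rfl this, Finset.sum_add_distrib,
      ih (fun a ha => h a (List.mem_cons_of_mem _ ha))]
    have : ∑ i ∈ Finset.range N, (if b = i then i else 0) = b := by
      simp [Finset.sum_ite_eq (Finset.range N) b, hb]
    omega

lemma CV_length (X : List ℕ) : (CV X).length = X.foldr max 0 + 1 := by
  simp [CV]

lemma list_range_map_sum (f : ℕ → ℕ) (n : ℕ) :
    ((List.range n).map f).sum = ∑ i ∈ Finset.range n, f i := by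
  induction n with
  | zero => simp
  | succ n ih => rw [List.range_succ, Finset.sum_range_succ, List.map_append]; simp [ih]

lemma CV_sum (X : List ℕ) : (CV X).sum = X.length := by
  rw [CV, list_range_map_sum,
    count_sum X (X.foldr max 0 + 1) (fun a ha => Nat.lt_succ_of_le (le_foldr_max ha))]

lemma mem_CV {X : List ℕ} {d : ℕ} (hd : d ∈ CV X) : ∃ i, d = X.count i := by
  simp only [CV, List.mem_map] at hd
  obtain ⟨i, _, rfl⟩ := hd
  exact ⟨i, rfl⟩

theorem cvseq_all_same_digits_length_le_five (L : List ℕ) (hL : DigitString L)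
    (h : AdmitsCVs L) :
    ∀ n, 3 ≤ n → (∀ a ∈ CVseq L n, ∀ b ∈ CVseq L n, a = b) →
      (CVseq L n).length ≤ 5 := by
  intro n hn hsame
  obtain ⟨k, rfl⟩ : ∃ k, n = k + 3 := ⟨n - 3, by omega⟩
  set H := CVseq L k with hH
  set I := CVseq L (k + 1) with hI
  set J := CVseq L (k + 2) with hJ
  have hIH : I = CV H := rfl
  have hJI : J = CV I := rfl
  have hK : CVseq L (k + 3) = CV J := rfl
  -- entries of H are ≤ 9
  have hH9 : ∀ d ∈ H, d ≤ 9 := by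
    cases k with
    | zero => exact hL.2
    | succ k' =>
      intro d hd
      obtain ⟨i, rfl⟩ := mem_CV (X := CVseq L k') hd
      exact h k' i
  -- sum J ≤ 10
  have hsumJ : J.sum ≤ 10 := by
    rw [hJI, CV_sum, hIH, CV_length]
    have := foldr_max_le_s10 hH9
    omega
  set m := J.foldr max 0 with hm
  -- J nonempty, so m ∈ J
  have hJne : J ≠ [] := by
    rw [hJI]
    intro hc
    have := CV_length I
    rw [hc] at this
    simp at this
  have hmJ : m ∈ J := foldr_max_mem hJne
  set c := J.count m with hc
  have hc1 : 1 ≤ c := List.count_pos_iff.2 hmJ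
  -- all counts of i < m+1 in J equal c
  have hcount : ∀ i < m + 1, J.count i = c := by
    intro i hi
    have h1 : J.count i ∈ CVseq L (k + 3) := by
      rw [hK, CV]
      exact List.mem_map.2 ⟨i, List.mem_range.2 hi, rfl⟩
    have h2 : J.count m ∈ CVseq L (k + 3) := by
      rw [hK, CV]
      exact List.mem_map.2 ⟨m, List.mem_range.2 (by omega), rfl⟩
    exact hsame _ h1 _ h2
  -- length of K
  have hlen : (CVseq L (k + 3)).length = m + 1 := by rw [hK, CV_length]
  by_contra hcon
  have hm5 : 6 ≤ m + 1 := by omega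
  -- sum J = ∑ i * c ≥ ∑_{i<6} i = 15
  have hws : ∑ i ∈ Finset.range (m + 1), i * J.count i = J.sum :=
    weighted_sum J (m + 1) (fun a ha => Nat.lt_succ_of_le (le_foldr_max ha))
  have h15 : 15 ≤ J.sum := by
    rw [← hws]
    calc 15 = ∑ i ∈ Finset.range 6, i * 1 := by decide
    _ ≤ ∑ i ∈ Finset.range (m + 1), i * 1 :=
        Finset.sum_le_sum_of_subset (Finset.range_subset_range.2 hm5)
    _ ≤ ∑ i ∈ Finset.range (m + 1), i * J.count i := by
        apply Finset.sum_le_sum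
        intro i hi
        have := hcount i (Finset.mem_range.1 hi)
        exact Nat.mul_le_mul_left i (by omega)
  omega
end

section
/- Let L be a digit string admitting an infinite sequence of CVs. Then for every n ≥ 3, if the height of CV_n(L) is more than 5, then the height of CV_{n+1}(L) is at most the height of CV_n(L). -/
lemma le_foldr_max_s11 (l : List ℕ) : ∀ x ∈ l, x ≤ l.foldr max 0 := by
  induction l with
  | nil => simp
  | cons a l ih =>
    intro x hx
    rcases List.mem_cons.mp hx with rfl | hx
    · exact le_max_left _ _
    · exact le_trans (ih x hx) (le_max_right _ _)

lemma foldr_max_le_s11 {l : List ℕ} {b : ℕ} (h : ∀ x ∈ l, x ≤ b) : l.foldr max 0 ≤ b := by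
  induction l with
  | nil => simp
  | cons a l ih =>
    simp only [List.foldr_cons]
    exact max_le (h a (by simp)) (ih fun x hx => h x (by simp [hx]))

lemma foldr_max_mem_s11 {l : List ℕ} (h : l ≠ []) : l.foldr max 0 ∈ l := by
  induction l with
  | nil => simp at h
  | cons a l ih =>
    rcases eq_or_ne l [] with rfl | hl
    · simp
    · rcases max_cases a (l.foldr max 0) with ⟨he, _⟩ | ⟨he, _⟩
      · simp [he]
      · simp only [List.foldr_cons, he]
        exact List.mem_cons_of_mem _ (ih hl)

lemma CV_ne_nil (l : List ℕ) : CV l ≠ [] := by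
  simp [CV, List.range_succ]

lemma length_CV (l : List ℕ) : (CV l).length = l.foldr max 0 + 1 := by
  simp [CV]

lemma mem_CV_s11 {x : ℕ} {l : List ℕ} (hx : x ∈ CV l) :
    ∃ i, i ≤ l.foldr max 0 ∧ x = l.count i := by
  obtain ⟨i, hi, rfl⟩ := List.mem_map.mp hx
  exact ⟨i, Nat.lt_succ_iff.mp (List.mem_range.mp hi), rfl⟩

lemma count_mem_CV {l : List ℕ} {i : ℕ} (hi : i ≤ l.foldr max 0) : l.count i ∈ CV l :=
  List.mem_map.mpr ⟨i, List.mem_range.mpr (Nat.lt_succ_of_le hi), rfl⟩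

lemma sum_ind (a : ℕ) : ∀ m : ℕ,
    ((List.range m).map (fun i => if (a == i) = true then 1 else 0)).sum
      = if a < m then 1 else 0 := by
  intro m
  induction m with
  | zero => simp
  | succ m ih =>
    rw [List.range_succ, List.map_append, List.sum_append, ih]
    simp only [List.map_singleton, List.sum_singleton, beq_iff_eq]
    split_ifs <;> omega

lemma sum_map_count_s11 (n : ℕ) (K : List ℕ) (h : ∀ x ∈ K, x < n) :
    ((List.range n).map (fun i => K.count i)).sum = K.length := by
  induction K with
  | nil => simp
  | cons a K ih =>
    have ha : a < n := h a (by simp)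
    have hK := ih (fun x hx => h x (by simp [hx]))
    have he : (fun i => (a :: K).count i)
        = fun i => K.count i + (if (a == i) = true then 1 else 0) := by
      funext i; rw [List.count_cons]
    rw [he, List.sum_map_add, hK, sum_ind, if_pos ha, List.length_cons]

lemma sum_CV (l : List ℕ) : (CV l).sum = l.length :=
  sum_map_count_s11 _ _ (fun x hx => Nat.lt_succ_of_le (le_foldr_max_s11 l x hx))

lemma mem_le_sum {l : List ℕ} {a : ℕ} (ha : a ∈ l) : a ≤ l.sum := by
  have := (List.perm_cons_erase ha).sum_eq
  simp only [List.sum_cons] at this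
  omega

lemma three_le_sum {K : List ℕ} {a b c : ℕ} (hab : a ≠ b) (hac : a ≠ c) (hbc : b ≠ c)
    (ha : a ∈ K) (hb : b ∈ K) (hc : c ∈ K) : a + b + c ≤ K.sum := by
  have hb1 : b ∈ K.erase a := (List.mem_erase_of_ne hab.symm).mpr hb
  have hc1 : c ∈ K.erase a := (List.mem_erase_of_ne hac.symm).mpr hc
  have hc2 : c ∈ (K.erase a).erase b := (List.mem_erase_of_ne hbc.symm).mpr hc1
  have e1 := (List.perm_cons_erase ha).sum_eq
  have e2 := (List.perm_cons_erase hb1).sum_eq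
  have e3 := mem_le_sum hc2
  simp only [List.sum_cons] at e1 e2
  omega

lemma CVseq_ne_nil (L : List ℕ) (hL : DigitString L) : ∀ n, CVseq L n ≠ []
  | 0 => hL.1
  | n + 1 => CV_ne_nil _

lemma entries_le9 (L : List ℕ) (hL : DigitString L) (h : AdmitsCVs L) :
    ∀ n, ∀ x ∈ CVseq L n, x ≤ 9
  | 0 => hL.2
  | n + 1 => fun x hx => by
    obtain ⟨i, _, rfl⟩ := mem_CV_s11 hx
    exact h n i

theorem cvseq_height_not_increasing (L : List ℕ) (hL : DigitString L)
    (h : AdmitsCVs L) :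
    ∀ n, 3 ≤ n → 5 < height (CVseq L n) →
      height (CVseq L (n + 1)) ≤ height (CVseq L n) := by
  intro n hn hbig
  set M := CVseq L n with hM
  have hlen : (CVseq L (n + 1)).length = M.foldr max 0 + 1 := length_CV M
  have hCVstep : CVseq L (n + 1) = CV M := rfl
  unfold height at hbig ⊢
  apply max_le
  · -- max entry of CV M, plus 1, is ≤ height M
    set c := (CVseq L (n + 1)).foldr max 0 with hc
    by_cases hc5 : c ≤ 5
    · omega
    · -- c ≥ 6, so c is an element of CV M, i.e. a count in M
      have hcmem : c ∈ CVseq L (n + 1) := foldr_max_mem_s11 (by rw [hCVstep]; exact CV_ne_nil M)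
      rw [hCVstep] at hcmem
      obtain ⟨v, hv, hcv⟩ := mem_CV_s11 hcmem
      have hclen : c ≤ M.length := hcv ▸ (List.count_le_length : M.count v ≤ M.length)
      by_cases hch : c + 1 ≤ max (M.foldr max 0 + 1) M.length
      · exact hch
      · exfalso
        -- c ≥ height M, hence c = M.length = height M, all entries of M equal v
        have hceq : M.count v = M.length := by omega
        have hall : ∀ b ∈ M, v = b := List.count_eq_length.mp hceq
        obtain ⟨m, rfl⟩ : ∃ m, n = m + 3 := ⟨n - 3, by omega⟩
        set K := CVseq L (m + 2) with hK
        set J := CVseq L (m + 1) with hJ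
        have hMK : M = CV K := rfl
        have hKJ : K = CV J := rfl
        -- every count of i ≤ max K in K equals v
        have hcnt : ∀ i, i ≤ K.foldr max 0 → K.count i = v := by
          intro i hi
          exact (hall _ (by rw [hMK]; exact count_mem_CV hi)).symm
        -- v ≥ 1
        have hKne : K ≠ [] := CVseq_ne_nil L hL (m + 2)
        have hvpos : 1 ≤ v := by
          have h1 : 0 < K.count (K.foldr max 0) :=
            List.count_pos_iff.mpr (foldr_max_mem_s11 hKne)
          have := hcnt _ (le_refl _)
          omega
        -- max K = M.length - 1 ≥ 5
        have hMlen : M.length = K.foldr max 0 + 1 := length_CV K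
        have ht5 : 5 ≤ K.foldr max 0 := by omega
        set t := K.foldr max 0 with htdef
        -- t, t-1, t-2 all in K
        have hmem : ∀ i, i ≤ t → i ∈ K := fun i hi =>
          List.count_pos_iff.mp (by rw [hcnt i hi]; omega)
        have h3 : (t - 2) + (t - 1) + t ≤ K.sum :=
          three_le_sum (by omega) (by omega) (by omega)
            (hmem _ (by omega)) (hmem _ (by omega)) (hmem _ (by omega))
        -- K.sum = J.length ≤ 10
        have hKsum : K.sum = J.length := by rw [hKJ]; exact sum_CV J
        have hJlen : J.length = (CVseq L m).foldr max 0 + 1 := length_CV _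
        have hJmax : (CVseq L m).foldr max 0 ≤ 9 :=
          foldr_max_le_s11 (entries_le9 L hL h m)
        omega
  · rw [hlen]
    exact le_max_left _ _
end

section
/- If (A, B) is a mutually-praising pair of positive natural numbers, then the digit 0 occurs in the base-10 representation of A and the digit 0 occurs in the base-10 representation of B. -/
/-- For positive natural numbers `M` and `N`, `M` is a biography of `N` if, writing the
base-10 digits of `M` most-significant-first as `m_0 … m_{k-1}`, one has
`k ≥ 1 + (the largest base-10 digit of N)`, and for every `i < k` the digit `m_i`
equals the number of occurrences of the digit `i` in the base-10 representation of `N`. -/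
def IsBiography (M N : ℕ) : Prop :=
  1 + (Nat.digits 10 N).foldr max 0 ≤ (msdDigits M).length ∧
    ∀ i < (msdDigits M).length, (msdDigits M).getD i 0 = (Nat.digits 10 N).count i

/-- A pair of distinct positive natural numbers `(A, B)` is mutually-praising if
`A` is a biography of `B` and `B` is a biography of `A`. -/
def MutuallyPraising (A B : ℕ) : Prop :=
  0 < A ∧ 0 < B ∧ A ≠ B ∧ IsBiography A B ∧ IsBiography B A

lemma bio_zero_mem (M N : ℕ) (hM : 0 < M) (h : IsBiography M N) :
    0 ∈ Nat.digits 10 N := by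
  have hne : Nat.digits 10 M ≠ [] := Nat.digits_ne_nil_iff_ne_zero.mpr hM.ne'
  have hlen : 0 < (msdDigits M).length := by
    simp [msdDigits, List.length_pos_iff, hne]
  have h0 := h.2 0 hlen
  have hhead : (msdDigits M).getD 0 0 = (Nat.digits 10 M).getLast hne := by
    have hlen' : 0 < (Nat.digits 10 M).length := by simpa [msdDigits] using hlen
    simp [msdDigits, List.getD_eq_getElem?_getD, List.getElem?_reverse hlen',
      List.getLast_eq_getElem,
      List.getElem?_eq_getElem (by omega : (Nat.digits 10 M).length - 1 < (Nat.digits 10 M).length)]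
  have hlast := Nat.getLast_digit_ne_zero 10 hM.ne'
  rw [hhead] at h0
  have : 0 < (Nat.digits 10 N).count 0 := by omega
  exact List.count_pos_iff.mp this

theorem mutuallyPraising_zero_mem (A B : ℕ) (h : MutuallyPraising A B) :
    0 ∈ Nat.digits 10 A ∧ 0 ∈ Nat.digits 10 B := by
  obtain ⟨hA, hB, _, hAB, hBA⟩ := h
  exact ⟨bio_zero_mem B A hB hBA, bio_zero_mem A B hA hAB⟩
end

section
/- If (A, B) is a mutually-praising pair of positive natural numbers, then at least one of A and B ends in the digit 0, i.e., at least one of A and B is divisible by 10. -/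
lemma mp_le_foldr_max {a : ℕ} : ∀ {d : List ℕ}, a ∈ d → a ≤ d.foldr max 0
  | b :: t, h => by
    rcases List.mem_cons.1 h with rfl | h
    · exact le_max_left _ _
    · exact le_trans (mp_le_foldr_max h) (le_max_right _ _)

lemma mp_sum_eq_sum_getD (d : List ℕ) :
    d.sum = ∑ i ∈ Finset.range d.length, d.getD i 0 := by
  induction d with
  | nil => simp
  | cons a t ih =>
    rw [List.sum_cons, List.length_cons, Finset.sum_range_succ', ih]
    simp [Nat.add_comm]

lemma mp_length_eq_sum_count (d : List ℕ) (k : ℕ) (h : ∀ x ∈ d, x < k) :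
    d.length = ∑ i ∈ Finset.range k, d.count i := by
  induction d with
  | nil => simp
  | cons a t ih =>
    have ha : a ∈ Finset.range k := Finset.mem_range.2 (h a (by simp))
    have ih' := ih (fun x hx => h x (by simp [hx]))
    simp only [List.length_cons, List.count_cons, beq_iff_eq, ih']
    rw [Finset.sum_add_distrib]
    have hsum1 : (∑ i ∈ Finset.range k, if a = i then 1 else 0) = 1 := by
      rw [Finset.sum_ite_eq (Finset.range k) a (fun _ => 1)]
      simp [ha]
    omega

/-- Structure lemma: a list of naturals of length `n ≥ 2` whose sum is `m ≥ 2`,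
containing `m-1`, with both end entries nonzero, must have `1` as an entry and all
middle entries zero. -/
lemma mp_struct (d : List ℕ) (m : ℕ) (hn : 2 ≤ d.length) (hm : 2 ≤ m)
    (hsum : d.sum = m) (hmem : m - 1 ∈ d)
    (h0 : d.getD 0 0 ≠ 0) (hl : d.getD (d.length - 1) 0 ≠ 0) :
    1 ∈ d ∧ ∀ i, 0 < i → i < d.length - 1 → d.getD i 0 = 0 := by
  set n := d.length with hndef
  have hsplit : Finset.range n = insert 0 (insert (n - 1) (Finset.Ioo 0 (n - 1))) := by
    ext x
    simp only [Finset.mem_range, Finset.mem_insert, Finset.mem_Ioo]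
    omega
  have h0n : (0 : ℕ) ∉ insert (n - 1) (Finset.Ioo 0 (n - 1)) := by
    simp only [Finset.mem_insert, Finset.mem_Ioo]
    omega
  have hn1 : (n - 1) ∉ Finset.Ioo 0 (n - 1) := by
    simp only [Finset.mem_Ioo]
    omega
  have hS : d.getD 0 0 + (d.getD (n - 1) 0 + ∑ i ∈ Finset.Ioo 0 (n - 1), d.getD i 0) = m := by
    rw [← hsum, mp_sum_eq_sum_getD d, ← hndef, hsplit, Finset.sum_insert h0n,
      Finset.sum_insert hn1]
  obtain ⟨p, hp, hgp⟩ := List.mem_iff_getElem.1 hmem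
  have hgp' : d.getD p 0 = m - 1 := by rw [List.getD_eq_getElem _ _ hp]; exact hgp
  have h0' := Nat.pos_of_ne_zero h0
  have hl' := Nat.pos_of_ne_zero hl
  have hp' : p = 0 ∨ p = n - 1 := by
    by_contra hcon
    push_neg at hcon
    have hpIoo : p ∈ Finset.Ioo 0 (n - 1) := by
      simp only [Finset.mem_Ioo]
      omega
    have hle : d.getD p 0 ≤ ∑ i ∈ Finset.Ioo 0 (n - 1), d.getD i 0 :=
      Finset.single_le_sum (f := fun i => d.getD i 0) (fun i _ => Nat.zero_le _) hpIoo
    omega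
  have hkey : (∑ i ∈ Finset.Ioo 0 (n - 1), d.getD i 0) = 0 ∧
      (d.getD 0 0 = 1 ∨ d.getD (n - 1) 0 = 1) := by
    rcases hp' with rfl | h
    · omega
    · rw [h] at hgp'
      omega
  obtain ⟨hs0, h1⟩ := hkey
  constructor
  · rcases h1 with h1 | h1
    · have hmem0 : d.getD 0 0 ∈ d := by
        rw [List.getD_eq_getElem _ _ (by omega : 0 < d.length)]
        exact List.getElem_mem _
      rwa [h1] at hmem0
    · have hmem1 : d.getD (n - 1) 0 ∈ d := by
        rw [List.getD_eq_getElem _ _ (by omega : n - 1 < d.length)]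
        exact List.getElem_mem _
      rwa [h1] at hmem1
  · intro i hi1 hi2
    exact Finset.sum_eq_zero_iff.1 hs0 i (by simp only [Finset.mem_Ioo]; omega)

/-- Main one-sided lemma. -/
lemma mp_oneSide (A B : ℕ) (hA : A ≠ 0) (hB : B ≠ 0)
    (hAB : IsBiography A B) (hBA : IsBiography B A)
    (h10A : ¬ 10 ∣ A) (h10B : ¬ 10 ∣ B) :
    1 ∈ Nat.digits 10 A ∧ 0 ∈ Nat.digits 10 B ∧ 2 ≤ (Nat.digits 10 B).length ∧
      ∀ i, 0 < i → i < (Nat.digits 10 A).length - 1 →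
        ((Nat.digits 10 A).reverse).getD i 0 = 0 := by
  obtain ⟨hABlen, hABcnt⟩ := hAB
  obtain ⟨hBAlen, hBAcnt⟩ := hBA
  simp only [msdDigits, List.length_reverse] at hABlen hABcnt hBAlen hBAcnt
  have hAne : Nat.digits 10 A ≠ [] := Nat.digits_ne_nil_iff_ne_zero.2 hA
  have hBne : Nat.digits 10 B ≠ [] := Nat.digits_ne_nil_iff_ne_zero.2 hB
  set dA := Nat.digits 10 A with hdA
  set dB := Nat.digits 10 B with hdB
  set k := dA.length with hk
  set l := dB.length with hl
  have hk0 : 0 < k := List.length_pos_iff.2 hAne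
  have hl0 : 0 < l := List.length_pos_iff.2 hBne
  -- last digits of digit expansions are nonzero
  have hlastA : dA.getLast hAne ≠ 0 := Nat.getLast_digit_ne_zero 10 hA
  have hlastB : dB.getLast hBne ≠ 0 := Nat.getLast_digit_ne_zero 10 hB
  have hk2 : 2 ≤ k := by
    have h1 := mp_le_foldr_max (List.getLast_mem hBne)
    have h2 : 1 ≤ dB.getLast hBne := Nat.pos_of_ne_zero hlastB
    omega
  have hl2 : 2 ≤ l := by
    have h1 := mp_le_foldr_max (List.getLast_mem hAne)
    have h2 : 1 ≤ dA.getLast hAne := Nat.pos_of_ne_zero hlastA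
    omega
  -- every digit of B is < k
  have hBlt : ∀ x ∈ dB, x < k := by
    intro x hx
    have := mp_le_foldr_max hx
    omega
  -- first digits of digit expansions
  have hA0 : dA.getD 0 0 = A % 10 := by
    have hd : dA = A % 10 :: Nat.digits 10 (A / 10) :=
      Nat.digits_def' (by norm_num) (Nat.pos_of_ne_zero hA)
    rw [hd]; rfl
  have hB0 : dB.getD 0 0 = B % 10 := by
    have hd : dB = B % 10 :: Nat.digits 10 (B / 10) :=
      Nat.digits_def' (by norm_num) (Nat.pos_of_ne_zero hB)
    rw [hd]; rfl
  have hA0ne : dA.getD 0 0 ≠ 0 := by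
    rw [hA0]
    intro hc
    exact h10A (Nat.dvd_iff_mod_eq_zero.mpr hc)
  have hB0ne : dB.getD 0 0 ≠ 0 := by
    rw [hB0]
    intro hc
    exact h10B (Nat.dvd_iff_mod_eq_zero.mpr hc)
  -- reverse getD identities
  have hrevA : ∀ i, i < k → dA.reverse.getD i 0 = dA.getD (k - 1 - i) 0 := by
    intro i hi
    rw [List.getD_eq_getElem _ _ (by simpa using hi),
      List.getD_eq_getElem _ _ (by omega : k - 1 - i < dA.length),
      List.getElem_reverse]
  have hrevB : ∀ i, i < l → dB.reverse.getD i 0 = dB.getD (l - 1 - i) 0 := by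
    intro i hi
    rw [List.getD_eq_getElem _ _ (by simpa using hi),
      List.getD_eq_getElem _ _ (by omega : l - 1 - i < dB.length),
      List.getElem_reverse]
  -- ends of revA are nonzero
  have hrevA0 : dA.reverse.getD 0 0 ≠ 0 := by
    rw [hrevA 0 hk0]
    simp only [Nat.sub_zero]
    rw [List.getD_eq_getElem _ _ (by omega : k - 1 < dA.length)]
    rw [List.getLast_eq_getElem] at hlastA
    exact hlastA
  have hrevAlast : dA.reverse.getD (k - 1) 0 ≠ 0 := by
    rw [hrevA (k - 1) (by omega)]
    simpa using hA0ne
  -- sum of revA is l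
  have hsumA : dA.reverse.sum = l := by
    rw [mp_sum_eq_sum_getD, List.length_reverse, hl]
    rw [mp_length_eq_sum_count dB k hBlt]
    exact Finset.sum_congr rfl (fun i hi => hABcnt i (Finset.mem_range.1 hi))
  -- (l-1) ∈ revA
  have hmemA : l - 1 ∈ dA.reverse := by
    have h1 : dB.reverse.getD (l - 1) 0 = dA.count (l - 1) := hBAcnt (l - 1) (by omega)
    have h2 : dB.reverse.getD (l - 1) 0 = dB.getD 0 0 := by
      rw [hrevB (l - 1) (by omega)]
      congr 1
      omega
    have h3 : 0 < dA.count (l - 1) := by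
      rw [← h1, h2]
      exact Nat.pos_of_ne_zero hB0ne
    exact List.mem_reverse.2 (List.count_pos_iff.1 h3)
  -- apply structure lemma
  have hstruct := mp_struct dA.reverse l (by simpa using hk2) hl2 hsumA hmemA hrevA0
    (by simpa using hrevAlast)
  obtain ⟨h1A, hmid⟩ := hstruct
  refine ⟨List.mem_reverse.1 h1A, ?_, hl2, ?_⟩
  · -- 0 ∈ dB, from leading digit of A = count of 0 in B
    have h1 : dA.reverse.getD 0 0 = dB.count 0 := hABcnt 0 hk0
    have h2 : 0 < dB.count 0 := by
      rw [← h1]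
      exact Nat.pos_of_ne_zero hrevA0
    exact List.count_pos_iff.1 h2
  · intro i hi1 hi2
    exact hmid i hi1 (by simpa using hi2)

theorem mutuallyPraising_ten_dvd (A B : ℕ) (h : MutuallyPraising A B) :
    10 ∣ A ∨ 10 ∣ B := by
  by_contra hc
  push_neg at hc
  obtain ⟨h10A, h10B⟩ := hc
  obtain ⟨hA0, hB0, hne, hAB, hBA⟩ := h
  have hA : A ≠ 0 := hA0.ne'
  have hB : B ≠ 0 := hB0.ne'
  obtain ⟨h1A, h0B, hl2, hmidA⟩ := mp_oneSide A B hA hB hAB hBA h10A h10B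
  obtain ⟨h1B, h0A, hk2, hmidB⟩ := mp_oneSide B A hB hA hBA hAB h10B h10A
  -- first show B has exactly two digits
  have hleq : (Nat.digits 10 B).length = 2 := by
    by_contra hcon
    have hl3 : 3 ≤ (Nat.digits 10 B).length := by omega
    have hz : (Nat.digits 10 B).reverse.getD 1 0 = 0 := hmidB 1 one_pos (by omega)
    have hc1 : (Nat.digits 10 B).reverse.getD 1 0 = (Nat.digits 10 A).count 1 := by
      have h' := hBA.2 1 (by simp only [msdDigits, List.length_reverse]; omega)
      simpa [msdDigits] using h'
    have hcnt : (Nat.digits 10 A).count 1 = 0 := by rw [← hc1, hz]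
    have hpos : 0 < (Nat.digits 10 A).count 1 := List.count_pos_iff.2 h1A
    omega
  obtain ⟨a, b, hab⟩ := List.length_eq_two.1 hleq
  have hB0' : (Nat.digits 10 B).getD 0 0 = B % 10 := by
    rw [Nat.digits_def' (by norm_num : (1:ℕ) < 10) (Nat.pos_of_ne_zero hB)]
    rfl
  have ha : a = B % 10 := by
    rw [hab] at hB0'
    simpa using hB0'
  have hane : a ≠ 0 := by
    rw [ha]
    intro hc2
    exact h10B (Nat.dvd_iff_mod_eq_zero.mpr hc2)
  have hbne : b ≠ 0 := by
    have hne' : Nat.digits 10 B ≠ [] := Nat.digits_ne_nil_iff_ne_zero.2 hB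
    have hlastD : (Nat.digits 10 B).getD ((Nat.digits 10 B).length - 1) 0 ≠ 0 := by
      rw [List.getD_eq_getElem _ _ (by
        have := List.length_pos_iff.2 hne'
        omega), ← List.getLast_eq_getElem]
      exact Nat.getLast_digit_ne_zero 10 hB
    rw [hab] at hlastD
    simpa using hlastD
  rw [hab] at h0B
  simp only [List.mem_cons, List.mem_singleton] at h0B
  rcases h0B with h' | h' | h'
  · exact hane h'.symm
  · exact hbne h'.symm
  · exact List.not_mem_nil h'
end
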